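/- Let α ∈ (2,∞) and let F : (0,∞) → (0,∞) be continuous, strictly increasing with lim_{t→∞} F(t) = ∞, and regularly varying of index 1/α. Let W : ℝ² → (0,∞) be measurable, Lebesgue integrable, and have regular (F,α)-decay. Then lim_{t→∞} [F(t)]^{-2} ∫_{ℝ²} (1 − e^{−t W(x)}) dx = π Γ((α−2)/α), where Γ denotes Euler's gamma function. -/

import Mathlib

open MeasureTheory Filter Real

noncomputable section

abbrev E2 := EuclideanSpace ℝ (Fin 2)

namespace StmtAux

lemma vol_ball2 (r : ℝ) (hr : 0 ≤ r) :
    volume (Metric.ball (0 : E2) r) = ENNReal.ofReal (π * r ^ 2) := by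
  rw [EuclideanSpace.volume_ball]
  rw [show (Fintype.card (Fin 2)) = 2 from Fintype.card_fin 2]
  rw [show ((2:ℕ) : ℝ) / 2 + 1 = 2 by norm_num, Real.Gamma_two]
  rw [show Real.sqrt π ^ 2 = π from Real.sq_sqrt pi_pos.le]
  rw [← ENNReal.ofReal_pow hr, ← ENNReal.ofReal_mul (by positivity)]
  ring_nf

lemma vol_closedBall2 (r : ℝ) (hr : 0 ≤ r) :
    volume (Metric.closedBall (0 : E2) r) = ENNReal.ofReal (π * r ^ 2) := by
  rw [Measure.addHaar_closedBall_eq_addHaar_ball]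
  exact vol_ball2 r hr

/-- Potter-type bound from regular variation plus monotonicity. -/
lemma potter (α γ : ℝ) (hα : 0 < α) (hγ1 : 1 / α < γ) (hγ2 : γ ≤ 1)
    (F : ℝ → ℝ)
    (hFpos : ∀ t > 0, 0 < F t)
    (hFmono : StrictMonoOn F (Set.Ioi 0))
    (hFreg : ∀ c > 0, Tendsto (fun t : ℝ => F (c * t) / F t) atTop (nhds (c ^ (1 / α)))) :
    ∃ t₀ : ℝ, 1 ≤ t₀ ∧ ∀ t, t₀ ≤ t → ∀ c, 1 ≤ c → F (c * t) ≤ 2 * c ^ γ * F t := by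
  have hγ0 : 0 < γ := lt_trans (by positivity) hγ1
  have h2γ : (2:ℝ) ^ (1/α) < 2 ^ γ := by
    exact Real.rpow_lt_rpow_left_iff one_lt_two |>.mpr hγ1
  have hev : ∀ᶠ t : ℝ in atTop, F (2 * t) / F t < 2 ^ γ :=
    (hFreg 2 two_pos).eventually_lt_const h2γ
  obtain ⟨t₁, ht₁⟩ := eventually_atTop.mp hev
  refine ⟨max t₁ 1, le_max_right _ _, ?_⟩
  set t₀ := max t₁ 1 with ht₀def
  have hstep : ∀ t, t₀ ≤ t → F (2 * t) ≤ 2 ^ γ * F t := by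
    intro t ht
    have htpos : 0 < t := lt_of_lt_of_le (lt_of_lt_of_le one_pos (le_max_right t₁ 1)) ht
    have := ht₁ t (le_trans (le_max_left t₁ 1) ht)
    have hFt : 0 < F t := hFpos t htpos
    rw [div_lt_iff₀ hFt] at this
    linarith
  have hiter : ∀ k : ℕ, ∀ t, t₀ ≤ t → F ((2:ℝ) ^ k * t) ≤ (2 ^ γ) ^ k * F t := by
    intro k
    induction k with
    | zero => intro t ht; simp
    | succ k ih =>
      intro t ht
      have htpos : 0 < t := lt_of_lt_of_le (lt_of_lt_of_le one_pos (le_max_right t₁ 1)) ht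
      have h2k : (1:ℝ) ≤ 2 ^ k := one_le_pow₀ one_le_two
      have h1 : t₀ ≤ 2 ^ k * t := le_trans ht (le_mul_of_one_le_left htpos.le h2k)
      calc F ((2:ℝ) ^ (k+1) * t) = F (2 * ((2:ℝ) ^ k * t)) := by ring_nf
        _ ≤ 2 ^ γ * F ((2:ℝ) ^ k * t) := hstep _ h1
        _ ≤ 2 ^ γ * ((2 ^ γ) ^ k * F t) := by
            have := ih t ht
            have h2γpos : (0:ℝ) < 2 ^ γ := Real.rpow_pos_of_pos two_pos γ
            nlinarith
        _ = (2 ^ γ) ^ (k+1) * F t := by ring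
  intro t ht c hc
  have htpos : 0 < t := lt_of_lt_of_le (lt_of_lt_of_le one_pos (le_max_right t₁ 1)) ht
  set k : ℕ := ⌈Real.logb 2 c⌉₊ with hkdef
  have hcpos : 0 < c := lt_of_lt_of_le one_pos hc
  have hlogb : 0 ≤ Real.logb 2 c := Real.logb_nonneg one_lt_two hc
  have hck : c ≤ 2 ^ k := by
    have : Real.logb 2 c ≤ (k : ℝ) := Nat.le_ceil _
    calc c = 2 ^ Real.logb 2 c := (Real.rpow_logb two_pos (by norm_num) hcpos).symm
      _ ≤ 2 ^ (k:ℝ) := Real.rpow_le_rpow_of_exponent_le one_le_two this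
      _ = 2 ^ k := by rw [Real.rpow_natCast]
  have hk1 : (k : ℝ) ≤ Real.logb 2 c + 1 := le_of_lt (Nat.ceil_lt_add_one hlogb)
  have h1 : F (c * t) ≤ F ((2:ℝ) ^ k * t) := by
    rcases eq_or_lt_of_le (mul_le_mul_of_nonneg_right hck htpos.le) with h | h
    · rw [h]
    · exact le_of_lt (hFmono (Set.mem_Ioi.mpr (by positivity)) (Set.mem_Ioi.mpr (by positivity)) h)
  have h2 : ((2:ℝ) ^ γ) ^ k ≤ 2 * c ^ γ := by
    have e1 : ((2:ℝ) ^ γ) ^ k = 2 ^ (γ * k) := by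
      rw [← Real.rpow_natCast ((2:ℝ)^γ) k, ← Real.rpow_mul (by norm_num)]
    rw [e1]
    have : γ * k ≤ γ * (Real.logb 2 c + 1) := by nlinarith
    calc (2:ℝ) ^ (γ * (k:ℝ)) ≤ 2 ^ (γ * (Real.logb 2 c + 1)) :=
        Real.rpow_le_rpow_of_exponent_le one_le_two this
      _ = 2 ^ γ * (2 ^ Real.logb 2 c) ^ γ := by
          rw [← Real.rpow_mul (by norm_num), ← Real.rpow_add two_pos]; ring_nf
      _ = 2 ^ γ * c ^ γ := by rw [Real.rpow_logb two_pos (by norm_num) hcpos]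
      _ ≤ 2 * c ^ γ := by
          have : (2:ℝ) ^ γ ≤ 2 ^ (1:ℝ) := Real.rpow_le_rpow_of_exponent_le one_le_two hγ2
          have hcγ : 0 ≤ c ^ γ := (Real.rpow_pos_of_pos hcpos γ).le
          rw [Real.rpow_one] at this
          nlinarith
  calc F (c * t) ≤ F ((2:ℝ) ^ k * t) := h1
    _ ≤ (2 ^ γ) ^ k * F t := hiter k t ht
    _ ≤ 2 * c ^ γ * F t := by
        have hFt : 0 < F t := hFpos t htpos
        nlinarith

lemma ratio_bound (γ : ℝ) (hγ : 0 < γ) (F : ℝ → ℝ)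
    (hFpos : ∀ t > 0, 0 < F t)
    (hFmono : StrictMonoOn F (Set.Ioi 0))
    (t₀ : ℝ) (ht₀ : 1 ≤ t₀)
    (hpot : ∀ t, t₀ ≤ t → ∀ c, 1 ≤ c → F (c * t) ≤ 2 * c ^ γ * F t) :
    ∀ t, t₀ ≤ t → ∀ u, 0 < u → (F (t / u) / F t) ^ 2 ≤ 4 * u ^ (-(2 * γ)) + 1 := by
  intro t ht u hu
  have htpos : 0 < t := lt_of_lt_of_le (lt_of_lt_of_le one_pos ht₀) ht
  have hFt : 0 < F t := hFpos t htpos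
  have hrpow_nonneg : 0 ≤ u ^ (-(2*γ)) := Real.rpow_nonneg hu.le _
  rcases le_or_gt u 1 with hu1 | hu1
  · have hc : (1:ℝ) ≤ 1/u := (le_div_iff₀ hu).mpr (by linarith)
    have hp := hpot t ht (1/u) hc
    rw [one_div_mul_eq_div] at hp
    have hFtu : 0 < F (t/u) := hFpos _ (by positivity)
    have hdiv : F (t/u) / F t ≤ 2 * (1/u) ^ γ := by
      rw [div_le_iff₀ hFt]; linarith
    have hnn : 0 ≤ F (t/u) / F t := by positivity
    have hsq : (F (t/u) / F t)^2 ≤ (2 * (1/u) ^ γ)^2 := by nlinarith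
    have key : (2 * (1/u) ^ γ)^2 = 4 * u ^ (-(2*γ)) := by
      rw [mul_pow]
      rw [one_div, ← Real.rpow_natCast (u⁻¹ ^ γ) 2, ← Real.rpow_mul (by positivity)]
      rw [← Real.rpow_neg_one u, ← Real.rpow_mul hu.le]
      norm_num
      ring_nf
    rw [key] at hsq
    linarith
  · have h1 : F (t/u) ≤ F t := by
      have h2 : t/u < t := by
        rw [div_lt_iff₀ hu]; nlinarith
      exact le_of_lt (hFmono (Set.mem_Ioi.mpr (by positivity)) (Set.mem_Ioi.mpr htpos) h2)
    have hFtu : 0 < F (t/u) := hFpos _ (by positivity)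
    have : (F (t/u) / F t) ≤ 1 := by rw [div_le_one hFt]; exact h1
    have hnn : 0 ≤ F (t/u) / F t := by positivity
    nlinarith

lemma nu_meas (W : E2 → ℝ) : Measurable fun s : ℝ => volume {x : E2 | s < W x} := by
  apply Antitone.measurable
  intro a b hab
  exact measure_mono (fun x hx => lt_of_le_of_lt hab hx)

lemma nu_lt_top (W : E2 → ℝ) (hWint : Integrable W) {s : ℝ} (hs : 0 < s) :
    volume {x : E2 | s < W x} ≠ ⊤ := by
  have h1 : {x : E2 | s < W x} ⊆ {x : E2 | s ≤ W x} := by intro x hx; simp only [Set.mem_setOf_eq] at *; linarith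
  exact ne_top_of_le_ne_top (hWint.measure_ge_lt_top hs).ne (measure_mono h1)

noncomputable def nur (W : E2 → ℝ) (s : ℝ) : ℝ := (volume {x : E2 | s < W x}).toReal

lemma nur_nonneg (W : E2 → ℝ) (s : ℝ) : 0 ≤ nur W s := ENNReal.toReal_nonneg

lemma nur_measurable (W : E2 → ℝ) : Measurable (nur W) :=
  ENNReal.measurable_toReal.comp (nu_meas W)

lemma nur_mono (W : E2 → ℝ) (hWint : Integrable W) {s s' : ℝ} (hs : 0 < s) (h : s ≤ s') :
    nur W s' ≤ nur W s :=
  ENNReal.toReal_mono (nu_lt_top W hWint hs)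
    (measure_mono (fun x hx => lt_of_le_of_lt h hx))

/-- Layer cake representation. -/
lemma layer (W : E2 → ℝ) (hWpos : ∀ x, 0 < W x) (hWmeas : Measurable W)
    (hWint : Integrable W) {t : ℝ} (ht : 0 < t) :
    (∫ x : E2, (1 - Real.exp (-(t * W x)))) =
      ∫ u in Set.Ioi (0:ℝ), Real.exp (-u) * (volume {x : E2 | u / t < W x}).toReal := by
  have hf_nn : 0 ≤ᵐ[(volume : Measure E2)] fun x : E2 => t * W x :=
    ae_of_all _ fun x => by have := hWpos x; positivity
  have hf : AEMeasurable (fun x : E2 => t * W x) volume := (hWmeas.const_mul t).aemeasurable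
  have g_intble : ∀ s > (0:ℝ), IntervalIntegrable (fun u => Real.exp (-u)) volume 0 s :=
    fun s _ => Continuous.intervalIntegrable (by continuity) 0 s
  have g_nn : ∀ᵐ u ∂volume.restrict (Set.Ioi (0:ℝ)), 0 ≤ Real.exp (-u) :=
    ae_of_all _ fun u => (Real.exp_pos _).le
  have key := lintegral_comp_eq_lintegral_meas_lt_mul volume hf_nn hf g_intble g_nn
  have hint : ∀ s : ℝ, (∫ u in (0:ℝ)..s, Real.exp (-u)) = 1 - Real.exp (-s) := by
    intro s
    rw [intervalIntegral.integral_comp_neg (fun u => Real.exp u)]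
    rw [integral_exp]
    simp
  have hsm : AEStronglyMeasurable (fun x : E2 => 1 - Real.exp (-(t * W x))) volume :=
    ((continuous_const.sub (Real.continuous_exp.comp continuous_neg)).measurable.comp
      (hWmeas.const_mul t)).aestronglyMeasurable
  have hnn : 0 ≤ᵐ[(volume : Measure E2)] fun x : E2 => 1 - Real.exp (-(t * W x)) := by
    refine ae_of_all _ fun x => ?_
    have := hWpos x
    have h1 : Real.exp (-(t * W x)) ≤ 1 := Real.exp_le_one_iff.mpr (by nlinarith)
    simp only [Pi.zero_apply]
    linarith
  have hmeasR : Measurable fun u : ℝ => Real.exp (-u) * (volume {x : E2 | u / t < W x}).toReal := by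
    apply Measurable.mul
    · exact (Real.continuous_exp.comp continuous_neg).measurable
    · exact ENNReal.measurable_toReal.comp ((nu_meas W).comp (measurable_id.div_const t))
  have hsmR : AEStronglyMeasurable
      (fun u : ℝ => Real.exp (-u) * (volume {x : E2 | u / t < W x}).toReal)
      (volume.restrict (Set.Ioi (0:ℝ))) := hmeasR.aestronglyMeasurable
  have hnnR : 0 ≤ᵐ[volume.restrict (Set.Ioi (0:ℝ))]
      fun u : ℝ => Real.exp (-u) * (volume {x : E2 | u / t < W x}).toReal := by
    refine ae_of_all _ fun u => ?_
    positivity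
  rw [MeasureTheory.integral_eq_lintegral_of_nonneg_ae hnn hsm,
      MeasureTheory.integral_eq_lintegral_of_nonneg_ae hnnR hsmR]
  congr 1
  have e1 : (∫⁻ x : E2, ENNReal.ofReal (1 - Real.exp (-(t * W x)))) =
      ∫⁻ u in Set.Ioi (0:ℝ), volume {x : E2 | u < t * W x} * ENNReal.ofReal (Real.exp (-u)) := by
    rw [← key]
    congr 1
    funext x
    rw [hint]
  rw [e1]
  apply lintegral_congr_ae
  filter_upwards [ae_restrict_mem measurableSet_Ioi] with u hu
  have hu0 : 0 < u := hu
  have hset : {x : E2 | u < t * W x} = {x : E2 | u / t < W x} := by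
    ext x
    simp only [Set.mem_setOf_eq, div_lt_iff₀ ht]
    rw [mul_comm]
  rw [hset]
  rw [ENNReal.ofReal_mul (Real.exp_pos _).le,
      ENNReal.ofReal_toReal (nu_lt_top W hWint (by positivity))]
  ring

lemma arith_lower (ε R r₀ b : ℝ) (hε : 0 < ε) (hε1 : ε < 1) (hRpos : 0 < R)
    (hr₀pos : 0 < r₀) (hbpos : 0 < b) (hb2 : (1+ε/2)*b = r₀)
    (hrb3 : R*(1+8/ε) ≤ r₀) :
    π * ((1-ε) * r₀)^2 ≤ π * b^2 - π * R^2 := by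
  have hm2 : ε * R + 8 * R ≤ r₀ * ε := by
    have he : R * (1 + 8/ε) * ε = ε * R + 8 * R := by field_simp
    nlinarith
  have hcoef : 0 ≤ ε/2 + ε^2 - (ε/2+ε^2/2)^2 := by
    nlinarith [mul_nonneg (sq_nonneg ε) (by linarith : (0:ℝ) ≤ 1 - ε),
      mul_nonneg (sq_nonneg ε) (by nlinarith : (0:ℝ) ≤ 1 - ε^2)]
  have k1 : b^2 - (1-ε)^2 * r₀^2 ≥ (ε/2) * b^2 := by
    have e : b^2 - (1-ε)^2*r₀^2 - (ε/2)*b^2 = (ε/2 + ε^2 - (ε/2+ε^2/2)^2)*b^2 := by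
      rw [← hb2]; ring
    nlinarith [mul_nonneg hcoef (sq_nonneg b)]
  have hbr : r₀ ≤ 2 * b := by nlinarith
  have k2 : (ε/2) * b^2 ≥ (ε/8) * r₀^2 := by
    have h4 : r₀^2 ≤ 4*b^2 := by nlinarith
    nlinarith [mul_le_mul_of_nonneg_left h4 hε.le]
  have k3 : (ε/8) * r₀^2 ≥ R^2 := by
    have h8 : 8*R ≤ r₀*ε := by nlinarith [mul_pos hε hRpos]
    have hx : 0 ≤ ε*(ε*r₀^2 - 8*R^2) := by nlinarith [sq_nonneg R]
    have := (mul_nonneg_iff_of_pos_left hε).mp hx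
    linarith
  have hfin : ((1-ε)*r₀)^2 ≤ b^2 - R^2 := by nlinarith
  nlinarith [mul_le_mul_of_nonneg_left hfin pi_pos.le]

lemma arith_upper (ε R r₀ a : ℝ) (hε : 0 < ε) (hε1 : ε < 1) (hRpos : 0 < R)
    (hr₀pos : 0 < r₀) (hapos : 0 < a) (ha2 : (1-ε/2)*a = r₀)
    (hrb2 : R*(1+1/(ε*(1-ε))) ≤ r₀) :
    π * R^2 + π * a^2 ≤ π * ((1+ε) * r₀)^2 := by
  have hεε : 0 < ε*(1-ε) := by nlinarith
  have hm2 : (ε*(1-ε)) * R + R ≤ r₀ * (ε*(1-ε)) := by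
    have he : R * (1 + 1/(ε*(1-ε))) * (ε*(1-ε)) = (ε*(1-ε)) * R + R := by
      have h1e : (1:ℝ) - ε ≠ 0 := (sub_pos.mpr hε1).ne'
      field_simp
    nlinarith
  have har : r₀ ≤ a := by nlinarith
  have k1 : (1+ε)^2 * r₀^2 - a^2 ≥ (ε*(1-ε)) * a^2 := by
    have e : (1+ε)^2*r₀^2 - a^2 - (ε*(1-ε))*a^2 = ((ε*(1-ε)/2)^2)*a^2 := by
      rw [← ha2]; ring
    nlinarith [mul_nonneg (sq_nonneg (ε*(1-ε)/2)) (sq_nonneg a)]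
  have k2 : (ε*(1-ε)) * a^2 ≥ (ε*(1-ε)) * r₀^2 := by
    have hsq : r₀^2 ≤ a^2 := by nlinarith
    nlinarith [mul_le_mul_of_nonneg_left hsq hεε.le]
  have k3 : (ε*(1-ε)) * r₀^2 ≥ R^2 := by
    set c := ε*(1-ε) with hc
    have h8 : R + c*R ≤ r₀*c := by linarith
    have hx : 0 ≤ c*(c*r₀^2 - R^2) := by nlinarith [sq_nonneg (R + c*R), mul_pos hεε hRpos]
    have := (mul_nonneg_iff_of_pos_left hεε).mp hx
    linarith
  have hfin : R^2 + a^2 ≤ ((1+ε)*r₀)^2 := by nlinarith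
  nlinarith [mul_le_mul_of_nonneg_left hfin pi_pos.le]

/-- Tail-measure two-sided bound from decay hypothesis. -/
lemma tailM (F : ℝ → ℝ)
    (hFmono : StrictMonoOn F (Set.Ioi 0))
    (hFtop : Tendsto F atTop atTop)
    (W : E2 → ℝ) (hWpos : ∀ x, 0 < W x) (hWint : Integrable W)
    (hWdecay : Tendsto (fun x : E2 => F (1 / W x) / ‖x‖)
      (comap (fun x : E2 => ‖x‖) atTop) (nhds 1))
    {ε : ℝ} (hε : 0 < ε) (hε1 : ε < 1) :
    ∃ s₀ > 0, ∀ s, 0 < s → s ≤ s₀ →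
      π * ((1 - ε) * F (1 / s)) ^ 2 ≤ (volume {x : E2 | s < W x}).toReal ∧
      (volume {x : E2 | s < W x}).toReal ≤ π * ((1 + ε) * F (1 / s)) ^ 2 := by
  have hdist := Metric.tendsto_nhds.mp hWdecay (ε/2) (by positivity)
  rw [eventually_comap] at hdist
  obtain ⟨R₀, hR₀⟩ := eventually_atTop.mp hdist
  set R : ℝ := max R₀ 1 with hRdef
  have hR1 : 1 ≤ R := le_max_right _ _
  have hRpos : 0 < R := lt_of_lt_of_le one_pos hR1
  have hdec : ∀ x : E2, R ≤ ‖x‖ →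
      (1 - ε/2) * ‖x‖ < F (1 / W x) ∧ F (1 / W x) < (1 + ε/2) * ‖x‖ := by
    intro x hx
    have h := hR₀ ‖x‖ (le_trans (le_max_left _ _) hx) x rfl
    rw [Real.dist_eq, abs_lt] at h
    have hxpos : 0 < ‖x‖ := lt_of_lt_of_le hRpos hx
    have hq : F (1 / W x) = (F (1 / W x) / ‖x‖) * ‖x‖ := (div_mul_cancel₀ _ hxpos.ne').symm
    constructor
    · rw [hq]; nlinarith [h.1]
    · rw [hq]; nlinarith [h.2]
  set Rbig : ℝ := max ((1+ε/2)*(R+1)) (max (R*(1+1/(ε*(1-ε)))) (R*(1+8/ε))) with hRbig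
  have hFinv : Tendsto (fun s : ℝ => F (1/s)) (nhdsWithin 0 (Set.Ioi 0)) atTop := by
    have h1 : Tendsto (fun s : ℝ => 1/s) (nhdsWithin 0 (Set.Ioi 0)) atTop := by
      simpa only [one_div] using tendsto_inv_nhdsGT_zero
    exact hFtop.comp h1
  have hev : ∀ᶠ s in nhdsWithin (0:ℝ) (Set.Ioi 0), Rbig ≤ F (1/s) :=
    hFinv.eventually (eventually_ge_atTop Rbig)
  obtain ⟨s₀, hs₀, hsub⟩ := mem_nhdsGT_iff_exists_Ioc_subset.mp hev
  refine ⟨s₀, hs₀, ?_⟩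
  intro s hs hss₀
  have hr₀ : Rbig ≤ F (1/s) := hsub ⟨hs, hss₀⟩
  set r₀ : ℝ := F (1/s) with hr₀def
  have hνfin := nu_lt_top W hWint hs
  have hrb1 : (1+ε/2)*(R+1) ≤ r₀ := le_trans (le_max_left _ _) hr₀
  have hrb2 : R*(1+1/(ε*(1-ε))) ≤ r₀ := le_trans (le_trans (le_max_left _ _) (le_max_right _ _)) hr₀
  have hrb3 : R*(1+8/ε) ≤ r₀ := le_trans (le_trans (le_max_right _ _) (le_max_right _ _)) hr₀
  have hr₀pos : 0 < r₀ := by nlinarith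
  constructor
  · -- lower bound via annulus
    set b : ℝ := r₀ / (1+ε/2) with hbdef
    have hbpos : 0 < b := by positivity
    have hbR : R + 1 ≤ b := by
      rw [hbdef, le_div_iff₀ (by linarith)]; nlinarith
    have hRb : R < b := by linarith
    have hsub2 : Metric.ball (0:E2) b \ Metric.closedBall 0 R ⊆ {x : E2 | s < W x} := by
      intro x hx
      obtain ⟨hxb, hxcb⟩ := hx
      rw [mem_ball_zero_iff] at hxb
      have hxR : R < ‖x‖ := by
        by_contra hcon
        exact hxcb (mem_closedBall_zero_iff.mpr (le_of_not_gt hcon))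
      have hd := (hdec x hxR.le).2
      have hFF : F (1 / W x) < F (1 / s) := by
        calc F (1 / W x) < (1+ε/2) * ‖x‖ := hd
          _ < (1+ε/2) * b := by nlinarith
          _ = r₀ := by rw [hbdef]; field_simp
      have hWx := hWpos x
      have hinv : 1 / W x < 1 / s := by
        by_contra hcon
        push_neg at hcon
        rcases eq_or_lt_of_le hcon with h | h
        · rw [← h] at hFF; exact lt_irrefl _ hFF
        · exact absurd (hFmono (Set.mem_Ioi.mpr (by positivity)) (Set.mem_Ioi.mpr (by positivity)) h)
            (not_lt.mpr hFF.le)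
      exact lt_of_one_div_lt_one_div hWx hinv
    have hvol : ENNReal.ofReal (π * b^2 - π * R^2) ≤ volume {x : E2 | s < W x} := by
      have h1 : volume (Metric.ball (0:E2) b \ Metric.closedBall 0 R) =
          ENNReal.ofReal (π * b^2) - ENNReal.ofReal (π * R^2) := by
        rw [measure_diff (Metric.closedBall_subset_ball hRb)
          measurableSet_closedBall.nullMeasurableSet
          (by rw [vol_closedBall2 R hRpos.le]; exact ENNReal.ofReal_ne_top),
          vol_ball2 b hbpos.le, vol_closedBall2 R hRpos.le]
      calc ENNReal.ofReal (π * b^2 - π * R^2)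
          = ENNReal.ofReal (π * b^2) - ENNReal.ofReal (π * R^2) :=
            ENNReal.ofReal_sub _ (by positivity)
        _ = volume (Metric.ball (0:E2) b \ Metric.closedBall 0 R) := h1.symm
        _ ≤ volume {x : E2 | s < W x} := measure_mono hsub2
    have h2 : π * b^2 - π * R^2 ≤ (volume {x : E2 | s < W x}).toReal := by
      have := ENNReal.toReal_mono hνfin hvol
      rcases le_or_gt (π * b^2 - π * R^2) 0 with h | h
      · exact le_trans h ENNReal.toReal_nonneg
      · rwa [ENNReal.toReal_ofReal h.le] at this
    have hb2 : (1+ε/2) * b = r₀ := by rw [hbdef]; field_simp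
    have h3 : π * ((1-ε) * r₀)^2 ≤ π * b^2 - π * R^2 :=
      arith_lower ε R r₀ b hε hε1 hRpos hr₀pos hbpos hb2 hrb3
    linarith
  · -- upper bound
    set a : ℝ := r₀ / (1-ε/2) with hadef
    have h12 : (0:ℝ) < 1 - ε/2 := by linarith
    have hapos : 0 < a := by positivity
    have hsub1 : {x : E2 | s < W x} ⊆
        Metric.closedBall (0:E2) R ∪ Metric.ball 0 a := by
      intro x hx
      rcases le_or_gt ‖x‖ R with h | h
      · exact Or.inl (mem_closedBall_zero_iff.mpr h)
      · right
        rw [mem_ball_zero_iff]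
        have hd := (hdec x h.le).1
        have hWx := hWpos x
        have hxs : s < W x := hx
        have hinv : 1 / W x < 1 / s := one_div_lt_one_div_of_lt hs hxs
        have hFF : F (1 / W x) < r₀ :=
          hFmono (Set.mem_Ioi.mpr (by positivity)) (Set.mem_Ioi.mpr (by positivity)) hinv
        rw [hadef, lt_div_iff₀ h12]
        nlinarith
    have hub : (volume {x : E2 | s < W x}).toReal ≤ π * R^2 + π * a^2 := by
      apply ENNReal.toReal_le_of_le_ofReal (by positivity)
      calc volume {x : E2 | s < W x}
          ≤ volume (Metric.closedBall (0:E2) R ∪ Metric.ball 0 a) := measure_mono hsub1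
        _ ≤ volume (Metric.closedBall (0:E2) R) + volume (Metric.ball (0:E2) a) :=
            measure_union_le _ _
        _ = ENNReal.ofReal (π * R^2) + ENNReal.ofReal (π * a^2) := by
            rw [vol_closedBall2 R hRpos.le, vol_ball2 a hapos.le]
        _ = ENNReal.ofReal (π * R^2 + π * a^2) := (ENNReal.ofReal_add (by positivity) (by positivity)).symm
    have ha2 : (1-ε/2) * a = r₀ := by
      rw [hadef, mul_comm, div_mul_cancel₀ _ h12.ne']
    have h3 : π * R^2 + π * a^2 ≤ π * ((1+ε) * r₀)^2 :=
      arith_upper ε R r₀ a hε hε1 hRpos hr₀pos hapos ha2 hrb2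
    linarith

lemma gInt (γ : ℝ) (hγ : 0 < γ) (h2γ : 2*γ < 1) :
    IntegrableOn (fun u : ℝ => Real.exp (-u) * (π * (4 * u ^ (-(2*γ)) + 1)))
      (Set.Ioi (0:ℝ)) := by
  have h1 : IntegrableOn (fun u : ℝ => Real.exp (-u) * u ^ ((1-2*γ) - 1)) (Set.Ioi 0) :=
    Real.GammaIntegral_convergent (by linarith)
  have h2 : IntegrableOn (fun u : ℝ => Real.exp (-u)) (Set.Ioi 0) := by
    simpa using exp_neg_integrableOn_Ioi 0 one_pos
  have he : (fun u : ℝ => Real.exp (-u) * (π * (4 * u ^ (-(2*γ)) + 1))) =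
      fun u => (π*4) * (Real.exp (-u) * u ^ ((1-2*γ)-1)) + π * Real.exp (-u) := by
    funext u
    rw [show (1-2*γ)-1 = -(2*γ) by ring]
    ring
  rw [he]
  exact (h1.const_mul _).add (h2.const_mul _)

/-- Limit of the main comparison integral, via dominated convergence. -/
lemma Klim (α γ : ℝ) (hα : 2 < α) (hγ1 : 1 / α < γ) (hγ2 : 2 * γ < 1)
    (F : ℝ → ℝ)
    (hFpos : ∀ t > 0, 0 < F t)
    (hFcont : ContinuousOn F (Set.Ioi 0))
    (hFreg : ∀ c > 0, Tendsto (fun t : ℝ => F (c * t) / F t) atTop (nhds (c ^ (1 / α))))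
    (s₀ : ℝ) (hs₀ : 0 < s₀) (t₀ : ℝ) (ht₀ : 1 ≤ t₀)
    (hrb : ∀ t, t₀ ≤ t → ∀ u, 0 < u → (F (t / u) / F t) ^ 2 ≤ 4 * u ^ (-(2 * γ)) + 1) :
    Tendsto (fun t : ℝ => ∫ u in Set.Ioc (0:ℝ) (s₀ * t),
        Real.exp (-u) * (π * (F (t / u) / F t) ^ 2))
      atTop (nhds (π * Real.Gamma ((α - 2) / α))) := by
  have hαpos : (0:ℝ) < α := by linarith
  have hγpos : 0 < γ := lt_trans (by positivity) hγ1
  set l : ℝ → ℝ := fun u => Real.exp (-u) * (π * u ^ (-(2/α))) with hldef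
  set ind : ℝ → ℝ → ℝ := fun t => (Set.Ioc (0:ℝ) (s₀*t)).indicator
    (fun u => Real.exp (-u) * (π * (F (t/u)/F t)^2)) with hinddef
  have hGamma : (∫ u in Set.Ioi (0:ℝ), l u) = π * Real.Gamma ((α-2)/α) := by
    have hs : 0 < (α-2)/α := div_pos (by linarith) hαpos
    rw [Real.Gamma_eq_integral hs, ← integral_const_mul]
    apply setIntegral_congr_fun measurableSet_Ioi
    intro u hu
    have hexp : (α-2)/α - 1 = -(2/α) := by field_simp; ring
    rw [hldef]
    simp only []
    rw [hexp]
    ring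
  rw [← hGamma]
  have hrepr : ∀ t : ℝ, (∫ u in Set.Ioc (0:ℝ) (s₀*t),
      Real.exp (-u) * (π * (F (t/u)/F t)^2)) = ∫ u in Set.Ioi (0:ℝ), ind t u := by
    intro t
    rw [hinddef]
    simp only []
    rw [MeasureTheory.integral_indicator measurableSet_Ioc,
        Measure.restrict_restrict measurableSet_Ioc,
        Set.inter_eq_left.mpr (fun u hu => hu.1)]
  have hmeas : ∀ᶠ t : ℝ in atTop,
      AEStronglyMeasurable (ind t) (volume.restrict (Set.Ioi 0)) := by
    filter_upwards [eventually_gt_atTop (0:ℝ)] with t ht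
    have hc1 : ContinuousOn (fun u : ℝ => t/u) (Set.Ioi 0) :=
      continuousOn_const.div continuousOn_id (fun u hu => ne_of_gt hu)
    have hmap : Set.MapsTo (fun u : ℝ => t/u) (Set.Ioi 0) (Set.Ioi 0) :=
      fun u hu => Set.mem_Ioi.mpr (div_pos ht hu)
    have hc2 : ContinuousOn (fun u : ℝ => F (t/u)) (Set.Ioi 0) := hFcont.comp hc1 hmap
    have hc : ContinuousOn (fun u : ℝ => Real.exp (-u) * (π * (F (t/u)/F t)^2))
        (Set.Ioi 0) :=
      ((Real.continuous_exp.comp continuous_neg).continuousOn).mul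
        (continuousOn_const.mul ((hc2.div_const _).pow 2))
    exact (hc.aestronglyMeasurable measurableSet_Ioi).indicator measurableSet_Ioc
  have hbint : Integrable (fun u : ℝ => Real.exp (-u) * (π * (4 * u ^ (-(2*γ)) + 1)))
      (volume.restrict (Set.Ioi 0)) := by
    have h1 : IntegrableOn (fun u : ℝ => Real.exp (-u) * u ^ ((1-2*γ) - 1)) (Set.Ioi 0) :=
      Real.GammaIntegral_convergent (by linarith)
    have h2 : IntegrableOn (fun u : ℝ => Real.exp (-u)) (Set.Ioi 0) := by
      simpa using exp_neg_integrableOn_Ioi 0 one_pos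
    have he : (fun u : ℝ => Real.exp (-u) * (π * (4 * u ^ (-(2*γ)) + 1))) =
        fun u => (π*4) * (Real.exp (-u) * u ^ ((1-2*γ)-1)) + π * Real.exp (-u) := by
      funext u
      rw [show (1-2*γ)-1 = -(2*γ) by ring]
      ring
    rw [he]
    exact (h1.const_mul _).add (h2.const_mul _)
  have h_bound : ∀ᶠ t : ℝ in atTop, ∀ᵐ u ∂(volume.restrict (Set.Ioi 0)),
      ‖ind t u‖ ≤ Real.exp (-u) * (π * (4 * u ^ (-(2*γ)) + 1)) := by
    filter_upwards [eventually_ge_atTop t₀] with t ht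
    rw [ae_restrict_iff' measurableSet_Ioi]
    refine ae_of_all _ fun u hu => ?_
    have hu0 : 0 < u := hu
    have hrnn : (0:ℝ) ≤ u ^ (-(2*γ)) := Real.rpow_nonneg hu0.le _
    by_cases hmem : u ∈ Set.Ioc (0:ℝ) (s₀*t)
    · rw [hinddef]
      simp only []
      rw [Set.indicator_of_mem hmem]
      have hb := hrb t ht u hu0
      rw [Real.norm_eq_abs, abs_of_nonneg (by positivity)]
      exact mul_le_mul_of_nonneg_left (mul_le_mul_of_nonneg_left hb pi_pos.le)
        (Real.exp_pos _).le
    · rw [hinddef]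
      simp only []
      rw [Set.indicator_of_notMem hmem]
      rw [norm_zero]
      positivity
  have h_lim : ∀ᵐ u ∂(volume.restrict (Set.Ioi 0)),
      Tendsto (fun t : ℝ => ind t u) atTop (nhds (l u)) := by
    rw [ae_restrict_iff' measurableSet_Ioi]
    refine ae_of_all _ fun u hu => ?_
    have hu0 : 0 < u := hu
    have hev : ∀ᶠ t : ℝ in atTop,
        ind t u = Real.exp (-u) * (π * (F (t/u)/F t)^2) := by
      filter_upwards [eventually_ge_atTop (u/s₀)] with t ht
      rw [hinddef]
      simp only []
      apply Set.indicator_of_mem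
      refine ⟨hu0, ?_⟩
      rw [div_le_iff₀ hs₀] at ht
      linarith [ht]
    have h0 : Tendsto (fun t : ℝ => F ((1/u)*t)/F t) atTop (nhds ((1/u) ^ ((1:ℝ)/α))) :=
      hFreg (1/u) (by positivity)
    have h0' : Tendsto (fun t : ℝ => F (t/u)/F t) atTop (nhds ((1/u) ^ ((1:ℝ)/α))) := by
      apply h0.congr
      intro t
      rw [one_div_mul_eq_div]
    have hval : (((1/u:ℝ)) ^ ((1:ℝ)/α))^2 = u ^ (-(2/α)) := by
      rw [one_div u, ← Real.rpow_natCast ((u⁻¹) ^ ((1:ℝ)/α)) 2,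
          ← Real.rpow_mul (inv_nonneg.mpr hu0.le),
          ← Real.rpow_neg_one u, ← Real.rpow_mul hu0.le]
      congr 1
      push_cast
      field_simp
    have htend : Tendsto (fun t : ℝ => Real.exp (-u) * (π * (F (t/u)/F t)^2)) atTop
        (nhds (l u)) := by
      have h1 := (h0'.pow 2).const_mul π
      have h2 := h1.const_mul (Real.exp (-u))
      rw [hldef]
      simp only []
      rw [← hval]
      exact h2
    exact htend.congr' (EventuallyEq.symm hev)
  have main := tendsto_integral_filter_of_dominated_convergence _ hmeas h_bound hbint h_lim
  exact main.congr (fun t => (hrepr t).symm)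

end StmtAux

/-- Lemma: for `W` integrable with regular `(F,α)`-decay, `α ∈ (2,∞)`,
`lim_{t→∞} [F(t)]⁻² ∫ (1 - e^{-tW(x)}) dx = π Γ((α-2)/α)`. -/
theorem stmt_0
    (α : ℝ) (hα : 2 < α)
    (F : ℝ → ℝ)
    (hFpos : ∀ t > 0, 0 < F t)
    (hFcont : ContinuousOn F (Set.Ioi 0))
    (hFmono : StrictMonoOn F (Set.Ioi 0))
    (hFtop : Tendsto F atTop atTop)
    (hFreg : ∀ c > 0, Tendsto (fun t : ℝ => F (c * t) / F t) atTop (nhds (c ^ (1 / α))))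
    (W : E2 → ℝ)
    (hWpos : ∀ x, 0 < W x)
    (hWmeas : Measurable W)
    (hWint : Integrable W)
    (hWdecay : Tendsto (fun x : E2 => F (1 / W x) / ‖x‖)
      (comap (fun x : E2 => ‖x‖) atTop) (nhds 1)) :
    Tendsto (fun t : ℝ => (∫ x : E2, (1 - Real.exp (-(t * W x)))) / (F t) ^ 2)
      atTop (nhds (π * Real.Gamma ((α - 2) / α))) := by
  classical
  have hαpos : (0:ℝ) < α := by linarith
  have h12 : 1/α < 1/2 := by
    rw [div_lt_div_iff₀ hαpos two_pos]; linarith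
  set γ : ℝ := (1/α + 1/2)/2 with hγdef
  have hγ1 : 1/α < γ := by rw [hγdef]; linarith
  have hγ2 : 2*γ < 1 := by rw [hγdef]; linarith
  have hγle : γ ≤ 1 := by
    rw [hγdef]
    have : 0 < 1/α := by positivity
    linarith
  have hγpos : 0 < γ := lt_trans (by positivity) hγ1
  clear_value γ
  obtain ⟨t₀, ht₀1, hpot⟩ := StmtAux.potter α γ hαpos hγ1 hγle F hFpos hFmono hFreg
  have hrb := StmtAux.ratio_bound γ hγpos F hFpos hFmono t₀ ht₀1 hpot
  set L : ℝ := π * Real.Gamma ((α-2)/α) with hLdef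
  have hL0 : 0 < L := by
    rw [hLdef]
    have : 0 < Real.Gamma ((α-2)/α) :=
      Real.Gamma_pos_of_pos (div_pos (by linarith) hαpos)
    positivity
  clear_value L
  rw [Metric.tendsto_nhds]
  intro δ hδ
  set ε : ℝ := min (1/2) (δ/(9*(L+1))) with hεdef
  have hε : 0 < ε := lt_min (by norm_num) (by positivity)
  have hε1 : ε < 1 := lt_of_le_of_lt (min_le_left _ _) (by norm_num)
  have hε2 : 3*ε*(L+1) ≤ δ/3 := by
    have h1 : ε ≤ δ/(9*(L+1)) := min_le_right _ _
    have h2 : 0 < L + 1 := by linarith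
    have h1' : ε * (9*(L+1)) ≤ δ := (le_div_iff₀ (by positivity)).mp h1
    linarith
  clear_value ε
  obtain ⟨s₀, hs₀, htail⟩ := StmtAux.tailM F hFmono hFtop W hWpos hWint hWdecay hε hε1
  have hKt := StmtAux.Klim α γ hα hγ1 hγ2 F hFpos hFcont hFreg s₀ hs₀ t₀ ht₀1 hrb
  set Kf : ℝ → ℝ := fun t => ∫ u in Set.Ioc (0:ℝ) (s₀ * t),
      Real.exp (-u) * (π * (F (t / u) / F t) ^ 2) with hKfdef
  clear_value Kf
  set νr : ℝ → ℝ := StmtAux.nur W with hνrdef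
  clear_value νr
  have ht₀pos : (0:ℝ) < t₀ := lt_of_lt_of_le one_pos ht₀1
  have hFt₀ : 0 < F t₀ := hFpos t₀ ht₀pos
  have E2' : ∀ᶠ t : ℝ in atTop, dist (Kf t) L < δ/3 := by
    have h := Metric.tendsto_nhds.mp hKt (δ/3) (by positivity)
    rw [← hLdef] at h
    exact h
  have E3 : ∀ᶠ t : ℝ in atTop, Kf t < L + 1 := by
    have h := hKt.eventually_lt_const (show π * Real.Gamma ((α-2)/α) < L + 1 by rw [← hLdef]; linarith)
    exact h
  have E4 : ∀ᶠ t : ℝ in atTop, νr s₀ * Real.exp (-(s₀*t)) < (δ/3) * F t₀^2 := by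
    have hm : Tendsto (fun t : ℝ => s₀ * t) atTop atTop :=
      Tendsto.const_mul_atTop hs₀ tendsto_id
    have hexp : Tendsto (fun t : ℝ => Real.exp (-(s₀*t))) atTop (nhds 0) :=
      Real.tendsto_exp_atBot.comp ((tendsto_neg_atTop_atBot).comp hm)
    have := hexp.const_mul (νr s₀)
    rw [mul_zero] at this
    exact this.eventually_lt_const (by positivity)
  filter_upwards [eventually_ge_atTop t₀, E2', E3, E4] with t ht hKdist hKlt htail'
  have htpos : 0 < t := lt_of_lt_of_le ht₀pos ht
  have hFt : 0 < F t := hFpos t htpos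
  have hFtmono : F t₀ ≤ F t := by
    rcases eq_or_lt_of_le ht with h | h
    · rw [h]
    · exact (hFmono (Set.mem_Ioi.mpr ht₀pos) (Set.mem_Ioi.mpr htpos) h).le
  set c : ℝ := s₀ * t with hcdef
  have hc0 : 0 < c := by positivity
  -- layer cake
  have hlayer : (∫ x : E2, (1 - Real.exp (-(t * W x)))) =
      ∫ u in Set.Ioi (0:ℝ), Real.exp (-u) * νr (u/t) := by
    rw [hνrdef]
    exact StmtAux.layer W hWpos hWmeas hWint htpos
  -- measurability of the integrand
  have hmeasm : Measurable fun u : ℝ => Real.exp (-u) * νr (u/t) := by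
    apply Measurable.mul
    · exact (Real.continuous_exp.comp continuous_neg).measurable
    · rw [hνrdef]
      exact (StmtAux.nur_measurable W).comp (measurable_id.div_const t)
  -- pointwise bounds on (0, c]
  have hptB : ∀ u ∈ Set.Ioc (0:ℝ) c,
      π * ((1 - ε) * F (t/u)) ^ 2 ≤ νr (u/t) ∧ νr (u/t) ≤ π * ((1 + ε) * F (t/u)) ^ 2 := by
    intro u hu
    have hut : 0 < u / t := div_pos hu.1 htpos
    have hut2 : u / t ≤ s₀ := by
      rw [div_le_iff₀ htpos]
      exact hu.2
    have h := htail (u/t) hut hut2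
    rw [one_div_div] at h
    rw [hνrdef]
    exact h
  have hptA : ∀ u ∈ Set.Ioc (0:ℝ) c,
      νr (u/t) ≤ (1+ε)^2 * (F t^2 * (π * (4 * u ^ (-(2*γ)) + 1))) := by
    intro u hu
    have hB := (hptB u hu).2
    have hr := hrb t ht u hu.1
    have he : π * ((1+ε) * F (t/u))^2 = (1+ε)^2 * (F t^2 * (π * (F (t/u)/F t)^2)) := by
      field_simp
    rw [he] at hB
    have h4 : (0:ℝ) ≤ (1+ε)^2 := sq_nonneg _
    have h5 : π * (F (t/u)/F t)^2 ≤ π * (4 * u ^ (-(2*γ)) + 1) :=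
      mul_le_mul_of_nonneg_left hr pi_pos.le
    calc νr (u/t) ≤ (1+ε)^2 * (F t^2 * (π * (F (t/u)/F t)^2)) := hB
      _ ≤ (1+ε)^2 * (F t^2 * (π * (4 * u ^ (-(2*γ)) + 1))) := by
          apply mul_le_mul_of_nonneg_left _ h4
          exact mul_le_mul_of_nonneg_left h5 (sq_nonneg _)
  -- integrability of comparison integrand on (0, c]
  have hcont : ContinuousOn (fun u : ℝ => Real.exp (-u) * (π * (F (t/u)/F t)^2))
      (Set.Ioi 0) := by
    have hc1 : ContinuousOn (fun u : ℝ => t/u) (Set.Ioi 0) :=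
      continuousOn_const.div continuousOn_id (fun u hu => ne_of_gt hu)
    have hmap : Set.MapsTo (fun u : ℝ => t/u) (Set.Ioi 0) (Set.Ioi 0) :=
      fun u hu => Set.mem_Ioi.mpr (div_pos htpos hu)
    have hc2 : ContinuousOn (fun u : ℝ => F (t/u)) (Set.Ioi 0) := hFcont.comp hc1 hmap
    exact ((Real.continuous_exp.comp continuous_neg).continuousOn).mul
      (continuousOn_const.mul ((hc2.div_const _).pow 2))
  have hgIoc : IntegrableOn (fun u : ℝ => Real.exp (-u) * (π * (4 * u ^ (-(2*γ)) + 1)))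
      (Set.Ioc (0:ℝ) c) :=
    (StmtAux.gInt γ hγpos hγ2).mono_set Set.Ioc_subset_Ioi_self
  have intK : IntegrableOn (fun u : ℝ => Real.exp (-u) * (π * (F (t/u)/F t)^2))
      (Set.Ioc (0:ℝ) c) := by
    apply hgIoc.mono'
    · exact ((hcont.mono Set.Ioc_subset_Ioi_self).aestronglyMeasurable measurableSet_Ioc)
    · rw [ae_restrict_iff' measurableSet_Ioc]
      refine ae_of_all _ fun u hu => ?_
      have hr := hrb t ht u hu.1
      rw [Real.norm_eq_abs, abs_of_nonneg (by positivity)]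
      exact mul_le_mul_of_nonneg_left (mul_le_mul_of_nonneg_left hr pi_pos.le)
        (Real.exp_pos _).le
  have intM : IntegrableOn (fun u : ℝ => Real.exp (-u) * νr (u/t)) (Set.Ioc (0:ℝ) c) := by
    apply Integrable.mono' (hgIoc.const_mul ((1+ε)^2 * F t^2))
    · exact hmeasm.aestronglyMeasurable
    · rw [ae_restrict_iff' measurableSet_Ioc]
      refine ae_of_all _ fun u hu => ?_
      have hA := hptA u hu
      have hnn : 0 ≤ νr (u/t) := hνrdef ▸ StmtAux.nur_nonneg W _
      rw [Real.norm_eq_abs, abs_of_nonneg (mul_nonneg (Real.exp_pos _).le hnn)]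
      calc Real.exp (-u) * νr (u/t)
          ≤ Real.exp (-u) * ((1+ε)^2 * (F t^2 * (π * (4 * u ^ (-(2*γ)) + 1)))) :=
            mul_le_mul_of_nonneg_left hA (Real.exp_pos _).le
        _ = (1+ε)^2 * F t^2 * (Real.exp (-u) * (π * (4 * u ^ (-(2*γ)) + 1))) := by ring
  have hexpIoi : IntegrableOn (fun u : ℝ => Real.exp (-u)) (Set.Ioi c) := by
    simpa using exp_neg_integrableOn_Ioi c one_pos
  have hνs₀fin := StmtAux.nu_lt_top W hWint hs₀
  have hptT : ∀ u ∈ Set.Ioi c, νr (u/t) ≤ νr s₀ := by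
    intro u hu
    have h1 : s₀ ≤ u / t := by
      rw [le_div_iff₀ htpos]
      exact le_of_lt hu
    rw [hνrdef]
    exact StmtAux.nur_mono W hWint hs₀ h1
  have intT : IntegrableOn (fun u : ℝ => Real.exp (-u) * νr (u/t)) (Set.Ioi c) := by
    apply Integrable.mono' (hexpIoi.const_mul (νr s₀))
    · exact hmeasm.aestronglyMeasurable
    · rw [ae_restrict_iff' measurableSet_Ioi]
      refine ae_of_all _ fun u hu => ?_
      have hnn : 0 ≤ νr (u/t) := hνrdef ▸ StmtAux.nur_nonneg W _
      rw [Real.norm_eq_abs, abs_of_nonneg (mul_nonneg (Real.exp_pos _).le hnn)]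
      calc Real.exp (-u) * νr (u/t) ≤ Real.exp (-u) * νr s₀ :=
            mul_le_mul_of_nonneg_left (hptT u hu) (Real.exp_pos _).le
        _ = νr s₀ * Real.exp (-u) := by ring
  -- split the integral
  have hsplit : (∫ u in Set.Ioi (0:ℝ), Real.exp (-u) * νr (u/t)) =
      (∫ u in Set.Ioc (0:ℝ) c, Real.exp (-u) * νr (u/t)) +
      (∫ u in Set.Ioi c, Real.exp (-u) * νr (u/t)) := by
    rw [← Set.Ioc_union_Ioi_eq_Ioi hc0.le]
    exact setIntegral_union (Set.Ioc_disjoint_Ioi le_rfl) measurableSet_Ioi intM intT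
  set M : ℝ := ∫ u in Set.Ioc (0:ℝ) c, Real.exp (-u) * νr (u/t) with hMdef
  set T : ℝ := ∫ u in Set.Ioi c, Real.exp (-u) * νr (u/t) with hTdef
  clear_value M T
  have hT0 : 0 ≤ T := by
    rw [hTdef]
    apply setIntegral_nonneg measurableSet_Ioi
    intro u hu
    exact mul_nonneg (Real.exp_pos _).le (hνrdef ▸ StmtAux.nur_nonneg W _)
  have hTle : T ≤ νr s₀ * Real.exp (-c) := by
    rw [hTdef]
    calc (∫ u in Set.Ioi c, Real.exp (-u) * νr (u/t))
        ≤ ∫ u in Set.Ioi c, νr s₀ * Real.exp (-u) := by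
          apply setIntegral_mono_on intT (hexpIoi.const_mul (νr s₀)) measurableSet_Ioi
          intro u hu
          calc Real.exp (-u) * νr (u/t) ≤ Real.exp (-u) * νr s₀ :=
                mul_le_mul_of_nonneg_left (hptT u hu) (Real.exp_pos _).le
            _ = νr s₀ * Real.exp (-u) := by ring
      _ = νr s₀ * Real.exp (-c) := by rw [integral_const_mul, integral_exp_neg_Ioi]
  have hK0 : 0 ≤ Kf t := by
    rw [hKfdef]
    apply setIntegral_nonneg measurableSet_Ioc
    intro u hu
    positivity
  -- main comparison
  have hMK : |M / F t^2 - Kf t| ≤ 3*ε*(Kf t) := by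
    have hdiv : M / F t^2 = ∫ u in Set.Ioc (0:ℝ) c, (Real.exp (-u) * νr (u/t)) / F t^2 := by
      rw [hMdef, integral_div]
    have hsub : M / F t^2 - Kf t = ∫ u in Set.Ioc (0:ℝ) c,
        ((Real.exp (-u) * νr (u/t)) / F t^2 - Real.exp (-u) * (π * (F (t/u)/F t)^2)) := by
      rw [hdiv, hKfdef]
      exact (integral_sub (intM.div_const _) intK).symm
    rw [hsub]
    calc |∫ u in Set.Ioc (0:ℝ) c,
        ((Real.exp (-u) * νr (u/t)) / F t^2 - Real.exp (-u) * (π * (F (t/u)/F t)^2))|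
        ≤ ∫ u in Set.Ioc (0:ℝ) c,
          |(Real.exp (-u) * νr (u/t)) / F t^2 - Real.exp (-u) * (π * (F (t/u)/F t)^2)| :=
          by
            simpa [Real.norm_eq_abs] using
              MeasureTheory.norm_integral_le_integral_norm
                (μ := volume.restrict (Set.Ioc (0:ℝ) c))
                (fun u : ℝ => (Real.exp (-u) * νr (u/t)) / F t^2 -
                  Real.exp (-u) * (π * (F (t/u)/F t)^2))
      _ ≤ ∫ u in Set.Ioc (0:ℝ) c, 3*ε*(Real.exp (-u) * (π * (F (t/u)/F t)^2)) := by
          apply setIntegral_mono_on ((intM.div_const _).sub intK).abs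
            (intK.const_mul (3*ε)) measurableSet_Ioc
          intro u hu
          simp only [Pi.sub_apply]
          have hB := hptB u hu
          have he : ∀ d : ℝ, Real.exp (-u) * (π * (d * F (t/u))^2) / F t^2 =
              d^2 * (Real.exp (-u) * (π * (F (t/u)/F t)^2)) := by
            intro d
            field_simp
          set k : ℝ := Real.exp (-u) * (π * (F (t/u)/F t)^2) with hkdef
          clear_value k
          have hk0 : 0 ≤ k := by rw [hkdef]; positivity
          have ha1 : (1-ε)^2 * k ≤ (Real.exp (-u) * νr (u/t)) / F t^2 := by
            rw [← he (1-ε)]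
            apply div_le_div_of_nonneg_right _ (by positivity)
            exact mul_le_mul_of_nonneg_left hB.1 (Real.exp_pos _).le
          have ha2 : (Real.exp (-u) * νr (u/t)) / F t^2 ≤ (1+ε)^2 * k := by
            rw [← he (1+ε)]
            apply div_le_div_of_nonneg_right _ (by positivity)
            exact mul_le_mul_of_nonneg_left hB.2 (Real.exp_pos _).le
          rw [abs_le]
          constructor
          · linarith [ha1, mul_nonneg (mul_nonneg hε.le hε.le) hk0, mul_nonneg hε.le hk0]
          · linarith [ha2, mul_nonneg (mul_nonneg hε.le (show (0:ℝ) ≤ 1-ε by linarith)) hk0]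
      _ = 3*ε*(Kf t) := by rw [integral_const_mul, hKfdef]
  -- wrap up
  have hMK2 : |M / F t^2 - Kf t| ≤ δ/3 := by
    have h1 : 3*ε*(Kf t) ≤ 3*ε*(L+1) := by
      apply mul_le_mul_of_nonneg_left hKlt.le (by positivity)
    linarith
  have hKL : |Kf t - L| < δ/3 := by
    rw [← Real.dist_eq]
    exact hKdist
  have hTsm : T / F t^2 < δ/3 := by
    have hF2 : (0:ℝ) < F t^2 := by positivity
    rw [div_lt_iff₀ hF2]
    have h1 : F t₀^2 ≤ F t^2 := pow_le_pow_left₀ hFt₀.le hFtmono 2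
    have h2 : T < (δ/3) * F t₀^2 := lt_of_le_of_lt hTle htail'
    have h3 : (δ/3) * F t₀^2 ≤ (δ/3) * F t^2 :=
      mul_le_mul_of_nonneg_left h1 (by positivity)
    linarith
  rw [Real.dist_eq, hlayer, hsplit]
  rw [show (M + T) / F t^2 = M / F t^2 + T / F t^2 from add_div _ _ _]
  have e1 := abs_le.mp hMK2
  have e2 := abs_lt.mp hKL
  have hTF0 : 0 ≤ T / F t^2 := by positivity
  rw [abs_lt]
  constructor
  · linarith
  · linarith
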